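/- Let λ = (x_1, x_2) be a shape with at most two rows (x_1 ≥ x_2 ≥ 0), set h_1 = x_1 + x_2, h_2 = x_1 − x_2, and define t(m, h_1, h_2) = F(m+2, h_1+2)·F(m, h_2) − F(m+2, h_2)·F(m, h_1+2). Then for every m ≥ 0, O_3^*(λ, m) = Σ_{s=0}^{m} C(m, s) · t(m−s, h_1, h_2), where C denotes the binomial coefficient. -/

import Mathlib

/-- The empty shape (Ferrers diagram with no squares). -/
def emptyShape : ℕ → ℕ := fun _ => 0

/-- `f : ℕ → ℕ` represents a shape (integer partition / Ferrers diagram), recording the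
number of squares in each row (0-indexed): rows are weakly decreasing and eventually zero. -/
def IsShape (f : ℕ → ℕ) : Prop := (∀ i, f (i + 1) ≤ f i) ∧ ∃ N, f N = 0

/-- The shape `f` has at most `r` (nonzero) rows. -/
def RowsLE (r : ℕ) (f : ℕ → ℕ) : Prop := f r = 0

/-- `mu` is obtained from `lam` by adding one square in row `j` (0-indexed). -/
def AddSquareAt (j : ℕ) (lam mu : ℕ → ℕ) : Prop :=
  mu j = lam j + 1 ∧ ∀ i, i ≠ j → mu i = lam i

/-- `mu` is obtained from `lam` by adding one square. -/
def AddSquare (lam mu : ℕ → ℕ) : Prop := ∃ j, AddSquareAt j lam mu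

/-- `mu` and `lam` differ by exactly one square (added or removed). -/
def OscStep (lam mu : ℕ → ℕ) : Prop := AddSquare lam mu ∨ AddSquare mu lam

/-- `mu` is obtained from `lam` by adding one square, removing one square, or doing nothing. -/
def StarStep (lam mu : ℕ → ℕ) : Prop := mu = lam ∨ OscStep lam mu

/-- `t` encodes a `*`-tableaux of shape `lam` and length `m`, all of whose shapes have at
most `k - 1` rows: `t 0 = ∅`, `t m = lam`, consecutive shapes differ by at most one square,
and the sequence is padded by `lam` from index `m` on (so that `t` is determined by its
values `t 0, …, t m`). -/
def IsStarTab (k : ℕ) (lam : ℕ → ℕ) (m : ℕ) (t : ℕ → ℕ → ℕ) : Prop :=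
  t 0 = emptyShape ∧ (∀ i, m ≤ i → t i = lam) ∧
  (∀ i, i < m → StarStep (t i) (t (i + 1))) ∧
  ∀ i, IsShape (t i) ∧ RowsLE (k - 1) (t i)

/-- `t` encodes an oscillating tableaux: a `*`-tableaux whose consecutive shapes differ. -/
def IsOscTab (k : ℕ) (lam : ℕ → ℕ) (m : ℕ) (t : ℕ → ℕ → ℕ) : Prop :=
  IsStarTab k lam m t ∧ ∀ i, i < m → t (i + 1) ≠ t i

/-- `O_k^*(lam, m)`: the number of `*`-tableaux of shape `lam` and length `m`, all of whose
shapes have at most `k - 1` rows. -/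
noncomputable def Ostar (k : ℕ) (lam : ℕ → ℕ) (m : ℕ) : ℕ :=
  Nat.card {t : ℕ → ℕ → ℕ // IsStarTab k lam m t}

/-- `O_k^0(lam, m)`: the number of oscillating tableaux of shape `lam` and length `m`, all of
whose shapes have at most `k - 1` rows. -/
noncomputable def Oosc (k : ℕ) (lam : ℕ → ℕ) (m : ℕ) : ℕ :=
  Nat.card {t : ℕ → ℕ → ℕ // IsOscTab k lam m t}

/-- A `(+□₁, −□₁)`-pair at position `i` of a tableaux of length `m`: a square is added in the
first row and immediately removed again. -/
def PairAt (m : ℕ) (t : ℕ → ℕ → ℕ) (i : ℕ) : Prop :=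
  i + 2 ≤ m ∧ AddSquareAt 0 (t i) (t (i + 1)) ∧ t (i + 2) = t i

/-- `Q_k^*(lam, m, j)`: the number of `*`-tableaux of shape `lam` and length `m` with at most
`k - 1` rows containing exactly `j` `(+□₁, −□₁)`-pairs. -/
noncomputable def Qstar (k : ℕ) (lam : ℕ → ℕ) (m j : ℕ) : ℕ :=
  Nat.card {t : ℕ → ℕ → ℕ //
    IsStarTab k lam m t ∧ Nat.card {i : ℕ // PairAt m t i} = j}

/-- `W_k^*(lam, m)`: the number of `*`-tableaux of shape `lam` and length `m` with at most
`k - 1` rows containing no `(+□₁, −□₁)`-pair. -/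
noncomputable def Wstar (k : ℕ) (lam : ℕ → ℕ) (m : ℕ) : ℕ :=
  Nat.card {t : ℕ → ℕ → ℕ // IsStarTab k lam m t ∧ ∀ i, ¬ PairAt m t i}

/-- `M` is a partial matching on `[n] = {1, …, n}`: a set of arcs `(i, j)` with
`1 ≤ i < j ≤ n` such that every vertex lies in at most one arc. -/
def IsPartialMatching (n : ℕ) (M : Finset (ℕ × ℕ)) : Prop :=
  (∀ p ∈ M, 1 ≤ p.1 ∧ p.1 < p.2 ∧ p.2 ≤ n) ∧
  ∀ p ∈ M, ∀ q ∈ M, p ≠ q → p.1 ≠ q.1 ∧ p.1 ≠ q.2 ∧ p.2 ≠ q.1 ∧ p.2 ≠ q.2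

/-- `M` contains a `k`-crossing: arcs `(i₁,j₁), …, (i_k,j_k)` with
`i₁ < ⋯ < i_k < j₁ < ⋯ < j_k`. -/
def HasKCrossing (k : ℕ) (M : Finset (ℕ × ℕ)) : Prop :=
  ∃ a : Fin k → ℕ × ℕ, (∀ i, a i ∈ M) ∧
    (∀ i j, i < j → (a i).1 < (a j).1) ∧
    (∀ i j, i < j → (a i).2 < (a j).2) ∧
    ∀ i j, (a i).1 < (a j).2

/-- `M` is a `k`-noncrossing partial matching on `[n]`. -/
def KNoncrossingPM (k n : ℕ) (M : Finset (ℕ × ℕ)) : Prop :=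
  IsPartialMatching n M ∧ ¬ HasKCrossing k M

/-- `f_k^*(n)`: the number of `k`-noncrossing partial matchings on `[n]`. -/
noncomputable def fstar (k n : ℕ) : ℕ :=
  Nat.card {M : Finset (ℕ × ℕ) // KNoncrossingPM k n M}

/-- `M` is a matching on `[n]`: a partial matching in which every vertex lies in an arc. -/
def IsMatching (n : ℕ) (M : Finset (ℕ × ℕ)) : Prop :=
  IsPartialMatching n M ∧ ∀ v, 1 ≤ v → v ≤ n → ∃ p ∈ M, p.1 = v ∨ p.2 = v

/-- `f_k(n)`: the number of `k`-noncrossing matchings on `[n]`. -/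
noncomputable def fmatch (k n : ℕ) : ℕ :=
  Nat.card {M : Finset (ℕ × ℕ) // IsMatching n M ∧ ¬ HasKCrossing k M}

/-- `M` is a `k`-noncrossing RNA structure on `[n]`: a `k`-noncrossing partial matching
without `1`-arcs `(i, i+1)`. -/
def IsRNA (k n : ℕ) (M : Finset (ℕ × ℕ)) : Prop :=
  KNoncrossingPM k n M ∧ ∀ i, (i, i + 1) ∉ M

/-- `S_k(n)`: the number of `k`-noncrossing RNA structures on `[n]`. -/
noncomputable def Snum (k n : ℕ) : ℕ :=
  Nat.card {M : Finset (ℕ × ℕ) // IsRNA k n M}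

/-- `F(n, h)`: the number of `±1`-sequences of length `n` with all partial sums nonnegative
and total sum `h` (lattice paths from `(0,0)` to `(n,h)` staying in the first quadrant). -/
noncomputable def Fpath (n h : ℕ) : ℕ :=
  Nat.card {s : Fin n → ℤ // (∀ i, s i = 1 ∨ s i = -1) ∧
    (∀ m : ℕ, 0 ≤ ∑ i ∈ Finset.univ.filter (fun i : Fin n => (i : ℕ) < m), s i) ∧
    (∑ i, s i) = (h : ℤ)}

/-- The two-row shape `(x₁, x₂)`. -/
def twoRowShape (x1 x2 : ℕ) : ℕ → ℕ :=
  fun i => if i = 0 then x1 else if i = 1 then x2 else 0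

/-- Add one square to row `h` (0-indexed) of `f`. -/
def addRow (h : ℕ) (f : ℕ → ℕ) : ℕ → ℕ := fun i => if i = h then f i + 1 else f i

/-- Remove one square from row `h` (0-indexed) of `f`. -/
def subRow (h : ℕ) (f : ℕ → ℕ) : ℕ → ℕ := fun i => if i = h then f i - 1 else f i

/-- `V_k^*(ν, m) = W_k^*(ν, m) − W_k^*(ν⁻, m−1)`, where `ν⁻` is `ν` with one square removed
from the first row, and the second term is `0` if `ν` has an empty first row (invalid `ν⁻`). -/
noncomputable def Vstar (k : ℕ) (nu : ℕ → ℕ) (m : ℕ) : ℤ :=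
  (Wstar k nu m : ℤ) - if 0 < nu 0 then (Wstar k (subRow 0 nu) (m - 1) : ℤ) else 0

/-- The hyperbolic Bessel function of the first kind of order `r` evaluated at `2x`, as a
formal power series: `I_r(2x) = Σ_{j ≥ max(0,−r)} x^{2j+r}/(j!·(r+j)!)`. -/
noncomputable def besselI (r : ℤ) : PowerSeries ℚ :=
  PowerSeries.mk fun n =>
    if r.natAbs ≤ n ∧ (n : ℤ) % 2 = r % 2 then
      (1 : ℚ) / (((((n : ℤ) - r) / 2).toNat.factorial * ((((n : ℤ) + r) / 2).toNat.factorial) : ℕ) : ℚ)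
    else 0


def fcnt : ℕ → ℕ → ℕ
  | 0, h => if h = 0 then 1 else 0
  | n+1, h => fcnt n (h+1) + if 1 ≤ h then fcnt n (h-1) else 0

noncomputable def Fz (n : ℕ) (h : ℤ) : ℤ :=
  if 0 ≤ h then (fcnt n h.toNat : ℤ) else if h = -1 then 0 else -(fcnt n (-h-2).toNat : ℤ)

lemma Fz_ofNat (n k : ℕ) : Fz n (k : ℤ) = (fcnt n k : ℤ) := by
  simp [Fz]

lemma Fz_neg_one (n : ℕ) : Fz n (-1) = 0 := by norm_num [Fz]

lemma Fz_neg (n k : ℕ) : Fz n (-(k:ℤ) - 2) = -(fcnt n k : ℤ) := by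
  have h1 : ¬ ((0:ℤ) ≤ -(k:ℤ)-2) := by omega
  have h2 : (-(k:ℤ)-2) ≠ -1 := by omega
  have h3 : (-(-(k:ℤ)-2)-2).toNat = k := by omega
  simp only [Fz, h1, h2, h3, if_false]

lemma fcnt_succ (n h : ℕ) : fcnt (n+1) h = fcnt n (h+1) + if 1 ≤ h then fcnt n (h-1) else 0 := rfl

lemma Fz_rec (n : ℕ) (h : ℤ) : Fz (n+1) h = Fz n (h+1) + Fz n (h-1) := by
  rcases (by omega : h = -1 ∨ 0 ≤ h ∨ h ≤ -2) with rfl | h0 | h0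
  · rw [Fz_neg_one, show (-1:ℤ)+1 = ((0:ℕ):ℤ) by norm_num, Fz_ofNat,
        show (-1:ℤ)-1 = (-((0:ℕ):ℤ)-2 : ℤ) by norm_num, Fz_neg]
    ring
  · obtain ⟨k, rfl⟩ : ∃ k:ℕ, h = (k:ℤ) := ⟨h.toNat, by omega⟩
    cases k with
    | zero =>
        rw [show ((0:ℕ):ℤ) = ((0:ℕ):ℤ) from rfl, Fz_ofNat,
            show ((0:ℕ):ℤ)+1 = ((1:ℕ):ℤ) by norm_num,
            show ((0:ℕ):ℤ)-1 = (-1:ℤ) by norm_num, Fz_ofNat, Fz_neg_one, fcnt_succ]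
        norm_num
    | succ j =>
        rw [show ((j+1:ℕ):ℤ)+1 = ((j+2:ℕ):ℤ) by push_cast; try ring,
            show ((j+1:ℕ):ℤ)-1 = ((j:ℕ):ℤ) by push_cast; try ring,
            Fz_ofNat, Fz_ofNat, Fz_ofNat, fcnt_succ]
        have hj : 1 ≤ j+1 := by omega
        rw [if_pos hj]
        push_cast
        ring
  · obtain ⟨k, rfl⟩ : ∃ k:ℕ, h = -(k:ℤ)-2 := ⟨(-h-2).toNat, by omega⟩
    rw [Fz_neg]
    cases k with
    | zero =>
        rw [show (-((0:ℕ):ℤ)-2)+1 = (-1:ℤ) by norm_num, Fz_neg_one,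
            show (-((0:ℕ):ℤ)-2)-1 = (-((1:ℕ):ℤ)-2:ℤ) by push_cast; try ring, Fz_neg, fcnt_succ]
        norm_num
    | succ j =>
        rw [show (-((j+1:ℕ):ℤ)-2)+1 = (-((j:ℕ):ℤ)-2:ℤ) by push_cast; try ring,
            show (-((j+1:ℕ):ℤ)-2)-1 = (-((j+2:ℕ):ℤ)-2:ℤ) by push_cast; try ring, Fz_neg, Fz_neg, fcnt_succ]
        have hj : 1 ≤ j+1 := by omega
        rw [if_pos hj]
        push_cast
        ring

noncomputable def Tz (n : ℕ) (a b : ℤ) : ℤ :=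
  Fz (n+2) (a+2) * Fz n b - Fz (n+2) b * Fz n (a+2)

lemma Tz_neg_one (n : ℕ) (a : ℤ) : Tz n a (-1) = 0 := by
  simp [Tz, Fz_neg_one]

lemma Tz_diag (n : ℕ) (a : ℤ) : Tz n a (a+2) = 0 := by
  unfold Tz; ring

lemma Tz_rec (n : ℕ) (a b : ℤ) :
    Tz (n+1) a b = Tz n (a+1) (b+1) + Tz n (a-1) (b-1) + Tz n (a-1) (b+1) + Tz n (a+1) (b-1) := by
  unfold Tz
  rw [show n+1+2 = (n+2)+1 from rfl, Fz_rec (n+2) (a+2), Fz_rec (n+2) b, Fz_rec n b, Fz_rec n (a+2)]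
  rw [show a+2+1 = a+1+2 by ring, show a+2-1 = a-1+2 by ring]
  ring

noncomputable def Rr (m : ℕ) (a b : ℤ) : ℤ :=
  ∑ s ∈ Finset.range (m+1), (m.choose s : ℤ) * Tz (m-s) a b

lemma Rr_neg_one (m : ℕ) (a : ℤ) : Rr m a (-1) = 0 := by
  unfold Rr
  exact Finset.sum_eq_zero fun s _ => by rw [Tz_neg_one]; ring

lemma Rr_diag (m : ℕ) (a : ℤ) : Rr m a (a+2) = 0 := by
  unfold Rr
  exact Finset.sum_eq_zero fun s _ => by rw [Tz_diag]; ring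

lemma Rr_rec (m : ℕ) (a b : ℤ) :
    Rr (m+1) a b = Rr m a b +
      (Rr m (a+1) (b+1) + Rr m (a-1) (b-1) + Rr m (a-1) (b+1) + Rr m (a+1) (b-1)) := by
  have h1 : Rr (m+1) a b
      = Rr m a b + (∑ i ∈ Finset.range (m+1), (m.choose (i+1) : ℤ) * Tz (m-i) a b
          + (1:ℤ) * Tz (m+1) a b) := by
    unfold Rr
    rw [Finset.sum_range_succ']
    have : ∀ i ∈ Finset.range (m+1),
        ((m+1).choose (i+1) : ℤ) * Tz (m+1-(i+1)) a b
          = (m.choose i : ℤ) * Tz (m-i) a b + (m.choose (i+1) : ℤ) * Tz (m-i) a b := by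
      intro i _
      rw [Nat.succ_sub_succ, Nat.choose_succ_succ]
      push_cast; ring
    rw [Finset.sum_congr rfl this, Finset.sum_add_distrib]
    simp
    ring
  have h3 : ∑ i ∈ Finset.range (m+1), (m.choose (i+1) : ℤ) * Tz (m-i) a b + (1:ℤ) * Tz (m+1) a b
      = ∑ s ∈ Finset.range (m+1), (m.choose s : ℤ) * Tz (m+1-s) a b := by
    rw [Finset.sum_range_succ' (fun s => (m.choose s : ℤ) * Tz (m+1-s) a b) m,
        Finset.sum_range_succ]
    simp [Nat.succ_sub_succ, Nat.choose_succ_self]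
  have h4 : ∑ s ∈ Finset.range (m+1), (m.choose s : ℤ) * Tz (m+1-s) a b
      = Rr m (a+1) (b+1) + Rr m (a-1) (b-1) + Rr m (a-1) (b+1) + Rr m (a+1) (b-1) := by
    unfold Rr
    rw [← Finset.sum_add_distrib, ← Finset.sum_add_distrib, ← Finset.sum_add_distrib]
    apply Finset.sum_congr rfl
    intro s hs
    have hs' : s ≤ m := by simpa using Nat.lt_succ_iff.mp (Finset.mem_range.mp hs)
    rw [show m+1-s = (m-s)+1 by omega, Tz_rec]
    ring
  rw [h1, h3, h4]

def cnt : ℕ → ℕ → ℕ → ℕ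
  | 0, a, b => if a = 0 ∧ b = 0 then 1 else 0
  | m+1, a, b => cnt m a b + cnt m (a+1) b + (if b+1 ≤ a then cnt m (a-1) b else 0)
      + (if 1 ≤ b then cnt m a (b-1) else 0) + (if b+1 ≤ a then cnt m a (b+1) else 0)

lemma fcnt_eq_zero (n : ℕ) : ∀ h : ℕ, n < h → fcnt n h = 0 := by
  induction n with
  | zero => intro h hh; simp [fcnt]; omega
  | succ n ih =>
      intro h hh
      rw [fcnt_succ, ih (h+1) (by omega)]
      rcases Nat.eq_or_lt_of_le (Nat.one_le_iff_ne_zero.mpr (by omega : h ≠ 0)) with h1 | h1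
      · rw [if_pos (by omega), ih (h-1) (by omega)]
      · rw [if_pos (by omega), ih (h-1) (by omega)]

lemma Tz_zero (h1 h2 : ℕ) : Tz 0 (h1:ℤ) (h2:ℤ) = if h1 = 0 ∧ h2 = 0 then 1 else 0 := by
  unfold Tz
  rw [show (h1:ℤ)+2 = ((h1+2:ℕ):ℤ) by push_cast; try ring,
      Fz_ofNat, Fz_ofNat, Fz_ofNat, Fz_ofNat,
      fcnt_eq_zero 0 (h1+2) (by omega)]
  cases h1 with
  | zero =>
      rw [show fcnt 2 (0+2) = 1 by decide]
      cases h2 with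
      | zero => simp [fcnt]
      | succ j => simp [fcnt]
  | succ j =>
      rw [fcnt_eq_zero 2 (j+1+2) (by omega)]
      simp

lemma cnt_eq_Rr (m : ℕ) : ∀ a b : ℕ, b ≤ a → (cnt m a b : ℤ) = Rr m ((a:ℤ)+b) ((a:ℤ)-b) := by
  induction m with
  | zero =>
      intro a b hba
      show ((if a = 0 ∧ b = 0 then 1 else 0 : ℕ) : ℤ) = _
      unfold Rr
      rw [Finset.sum_range_one]
      rw [show (a:ℤ)+b = ((a+b:ℕ):ℤ) by push_cast; try ring,
          show (a:ℤ)-b = ((a-b:ℕ):ℤ) by omega]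
      show _ = (Nat.choose 0 0 : ℤ) * Tz (0-0) _ _
      rw [Nat.choose_self, Nat.sub_self, Tz_zero]
      split_ifs <;> simp_all <;> omega
  | succ m ih =>
      intro a b hba
      rw [Rr_rec]
      have h0 := ih a b hba
      have h1 : (cnt m (a+1) b : ℤ) = Rr m ((a:ℤ)+b+1) ((a:ℤ)-b+1) := by
        have := ih (a+1) b (by omega)
        rw [show ((a+1:ℕ):ℤ) = (a:ℤ)+1 by push_cast; try ring] at this
        rw [this, show (a:ℤ)+1+b = (a:ℤ)+b+1 by ring, show (a:ℤ)+1-b = (a:ℤ)-b+1 by ring]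
      have h2 : ((if b+1 ≤ a then cnt m (a-1) b else 0 : ℕ) : ℤ)
          = Rr m ((a:ℤ)+b-1) ((a:ℤ)-b-1) := by
        by_cases hc : b+1 ≤ a
        · rw [if_pos hc]
          have := ih (a-1) b (by omega)
          rw [show ((a-1:ℕ):ℤ) = (a:ℤ)-1 by omega] at this
          rw [this, show (a:ℤ)-1+b = (a:ℤ)+b-1 by ring, show (a:ℤ)-1-b = (a:ℤ)-b-1 by ring]
        · rw [if_neg hc, show (a:ℤ)-b-1 = (-1:ℤ) by omega, Rr_neg_one]
          simp
      have h3 : ((if 1 ≤ b then cnt m a (b-1) else 0 : ℕ) : ℤ)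
          = Rr m ((a:ℤ)+b-1) ((a:ℤ)-b+1) := by
        by_cases hc : 1 ≤ b
        · rw [if_pos hc]
          have := ih a (b-1) (by omega)
          rw [show ((b-1:ℕ):ℤ) = (b:ℤ)-1 by omega] at this
          rw [this, show (a:ℤ)+((b:ℤ)-1) = (a:ℤ)+b-1 by ring,
              show (a:ℤ)-((b:ℤ)-1) = (a:ℤ)-b+1 by ring]
        · rw [if_neg hc, show (a:ℤ)-b+1 = ((a:ℤ)+b-1)+2 by omega, Rr_diag]
          simp
      have h4 : ((if b+1 ≤ a then cnt m a (b+1) else 0 : ℕ) : ℤ)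
          = Rr m ((a:ℤ)+b+1) ((a:ℤ)-b-1) := by
        by_cases hc : b+1 ≤ a
        · rw [if_pos hc]
          have := ih a (b+1) hc
          rw [show ((b+1:ℕ):ℤ) = (b:ℤ)+1 by push_cast; try ring] at this
          rw [this, show (a:ℤ)+((b:ℤ)+1) = (a:ℤ)+b+1 by ring,
              show (a:ℤ)-((b:ℤ)+1) = (a:ℤ)-b-1 by ring]
        · rw [if_neg hc, show (a:ℤ)-b-1 = (-1:ℤ) by omega, Rr_neg_one]
          simp
      show ((cnt m a b + cnt m (a+1) b + (if b+1 ≤ a then cnt m (a-1) b else 0)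
          + (if 1 ≤ b then cnt m a (b-1) else 0) + (if b+1 ≤ a then cnt m a (b+1) else 0) : ℕ) : ℤ) = _
      push_cast [h0, h1]
      push_cast at h2 h3 h4
      rw [h2, h3, h4]
      ring

def PathCond (n h : ℕ) (s : Fin n → ℤ) : Prop :=
  (∀ i, s i = 1 ∨ s i = -1) ∧
  (∀ m : ℕ, 0 ≤ ∑ i ∈ Finset.univ.filter (fun i : Fin n => (i : ℕ) < m), s i) ∧
  (∑ i, s i) = (h : ℤ)

lemma Fpath_def (n h : ℕ) : Fpath n h = Nat.card {s : Fin n → ℤ // PathCond n h s} := rfl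

lemma finite_path {n : ℕ} (Q : (Fin n → ℤ) → Prop) (hQ : ∀ s, Q s → ∀ i, s i = 1 ∨ s i = -1) :
    Finite {s : Fin n → ℤ // Q s} := by
  apply Finite.of_injective (fun s : {s : Fin n → ℤ // Q s} => (fun i => decide (s.1 i = 1) : Fin n → Bool))
  intro s t h
  apply Subtype.ext
  funext i
  have hi := congrFun h i
  simp only [decide_eq_decide] at hi
  rcases hQ s.1 s.2 i with h1 | h1 <;> rcases hQ t.1 t.2 i with h2 | h2 <;> simp_all

lemma card_subtype_and {α : Type*} (A : α → Prop) (P : Prop) [Decidable P] :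
    Nat.card {x : α // A x ∧ P} = if P then Nat.card {x : α // A x} else 0 := by
  by_cases hP : P
  · rw [if_pos hP]
    exact Nat.card_congr (Equiv.subtypeEquivRight (fun x => by simp [hP]))
  · rw [if_neg hP]
    have : IsEmpty {x : α // A x ∧ P} := ⟨fun t => hP t.2.2⟩
    exact Nat.card_of_isEmpty

lemma sum_filter_split (n : ℕ) (s : Fin (n+1) → ℤ) (m : ℕ) :
    ∑ i ∈ Finset.univ.filter (fun i : Fin (n+1) => (i:ℕ) < m), s i
    = (∑ i ∈ Finset.univ.filter (fun i : Fin n => (i:ℕ) < m), s i.castSucc)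
      + if n < m then s (Fin.last n) else 0 := by
  rw [Finset.sum_filter, Finset.sum_filter, Fin.sum_univ_castSucc]
  simp

lemma sum_snoc (n : ℕ) (s : Fin n → ℤ) (c : ℤ) :
    (∑ i, Fin.snoc s c i) = (∑ i, s i) + c := by
  rw [Fin.sum_univ_castSucc]
  simp

lemma pathcond_snoc (n h' : ℕ) (s : Fin n → ℤ) (c : ℤ) (hc : c = 1 ∨ c = -1)
    (hs : PathCond n h' s) (h : ℕ) (hh : (h:ℤ) = (h':ℤ) + c) :
    PathCond (n+1) h (Fin.snoc s c) := by
  obtain ⟨h1, h2, h3⟩ := hs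
  refine ⟨?_, ?_, ?_⟩
  · intro i
    refine Fin.lastCases ?_ (fun j => ?_) i
    · simpa using hc
    · simpa using h1 j
  · intro m
    rw [sum_filter_split]
    have e : (∑ i ∈ Finset.univ.filter (fun i : Fin n => (i:ℕ) < m), (Fin.snoc s c : Fin (n+1) → ℤ) i.castSucc)
        = ∑ i ∈ Finset.univ.filter (fun i : Fin n => (i:ℕ) < m), s i := by
      apply Finset.sum_congr rfl
      intro i _
      simp
    rw [e]
    by_cases hm : n < m
    · rw [if_pos hm]
      have : Finset.univ.filter (fun i : Fin n => (i:ℕ) < m) = Finset.univ := by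
        apply Finset.filter_true_of_mem
        intro i _
        exact lt_trans i.isLt hm
      rw [this, h3]
      simp only [Fin.snoc_last]
      omega
    · rw [if_neg hm]
      simpa using h2 m
  · rw [sum_snoc, h3]
    omega

lemma Fpath_zero (h : ℕ) : Fpath 0 h = if h = 0 then 1 else 0 := by
  rw [Fpath_def]
  by_cases h0 : h = 0
  · subst h0
    rw [if_pos rfl]
    haveI : Unique {s : Fin 0 → ℤ // PathCond 0 0 s} := by
      refine ⟨⟨⟨fun i => i.elim0, ?_, ?_, ?_⟩⟩, ?_⟩
      · intro i; exact i.elim0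
      · intro m; simp
      · simp
      · intro t; exact Subtype.ext (funext fun i => i.elim0)
    exact Nat.card_unique
  · rw [if_neg h0]
    have : IsEmpty {s : Fin 0 → ℤ // PathCond 0 h s} := by
      refine ⟨fun t => h0 ?_⟩
      have := t.2.2.2
      rw [Fin.sum_univ_zero] at this
      omega
    exact Nat.card_of_isEmpty

lemma Fpath_succ (n h : ℕ) :
    Fpath (n+1) h = Fpath n (h+1) + (if 1 ≤ h then Fpath n (h-1) else 0) := by
  classical
  simp only [Fpath_def]
  rw [← card_subtype_and (PathCond n (h-1)) (1 ≤ h)]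
  set B := {s : Fin n → ℤ // PathCond n (h+1) s}
  set C := {s : Fin n → ℤ // PathCond n (h-1) s ∧ 1 ≤ h}
  have gB : ∀ s : B, PathCond (n+1) h (Fin.snoc s.1 (-1)) := by
    intro s
    exact pathcond_snoc n (h+1) s.1 (-1) (Or.inr rfl) s.2 h (by push_cast; ring)
  have gC : ∀ s : C, PathCond (n+1) h (Fin.snoc s.1 1) := by
    intro s
    refine pathcond_snoc n (h-1) s.1 1 (Or.inl rfl) s.2.1 h ?_
    have := s.2.2
    omega
  let g : B ⊕ C → {s : Fin (n+1) → ℤ // PathCond (n+1) h s} := fun x =>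
    match x with
    | Sum.inl s => ⟨Fin.snoc s.1 (-1), gB s⟩
    | Sum.inr s => ⟨Fin.snoc s.1 1, gC s⟩
  have hginj : Function.Injective g := by
    intro x y hxy
    match x, y with
    | Sum.inl s, Sum.inl t =>
        have := congrArg Subtype.val hxy
        congr 1
        apply Subtype.ext
        funext i
        have := congrFun this i.castSucc
        simpa [g] using this
    | Sum.inl s, Sum.inr t =>
        have := congrFun (congrArg Subtype.val hxy) (Fin.last n)
        simp [g] at this
    | Sum.inr s, Sum.inl t =>
        have := congrFun (congrArg Subtype.val hxy) (Fin.last n)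
        simp [g] at this
    | Sum.inr s, Sum.inr t =>
        have := congrArg Subtype.val hxy
        congr 1
        apply Subtype.ext
        funext i
        have := congrFun this i.castSucc
        simpa [g] using this
  have hgsurj : Function.Surjective g := by
    rintro ⟨t, ht⟩
    obtain ⟨ht1, ht2, ht3⟩ := ht
    have init1 : ∀ i : Fin n, Fin.init t i = 1 ∨ Fin.init t i = -1 := fun i => ht1 i.castSucc
    have init2 : ∀ m : ℕ, 0 ≤ ∑ i ∈ Finset.univ.filter (fun i : Fin n => (i:ℕ) < m), Fin.init t i := by
      intro m
      by_cases hm : n < m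
      · have : Finset.univ.filter (fun i : Fin n => (i:ℕ) < m) = Finset.univ := by
          apply Finset.filter_true_of_mem
          intro i _
          exact lt_trans i.isLt hm
        rw [this]
        have hn := ht2 n
        rw [sum_filter_split] at hn
        simp only [if_neg (lt_irrefl n)] at hn
        have : (∑ i, Fin.init t i) = ∑ i ∈ Finset.univ.filter (fun i : Fin n => (i:ℕ) < n), t i.castSucc := by
          rw [Finset.filter_true_of_mem]
          · rfl
          · intro i _; exact i.isLt
        rw [this]
        omega
      · have hm' := ht2 m
        rw [sum_filter_split, if_neg hm] at hm'
        simpa [Fin.init] using hm'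
    have initsum : (∑ i, Fin.init t i) = (h:ℤ) - t (Fin.last n) := by
      have : (∑ i, t i) = (∑ i, Fin.init t i) + t (Fin.last n) := by
        rw [Fin.sum_univ_castSucc]; rfl
      omega
    have hlastsum : 0 ≤ (h:ℤ) - t (Fin.last n) := by
      have hn := ht2 n
      rw [sum_filter_split, if_neg (lt_irrefl n)] at hn
      have : (∑ i, Fin.init t i) = ∑ i ∈ Finset.univ.filter (fun i : Fin n => (i:ℕ) < n), t i.castSucc := by
        rw [Finset.filter_true_of_mem]
        · rfl
        · intro i _; exact i.isLt
      omega
    rcases ht1 (Fin.last n) with hl | hl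
    · refine ⟨Sum.inr ⟨Fin.init t, ⟨init1, init2, ?_⟩, ?_⟩, ?_⟩
      · rw [initsum, hl]
        have : 1 ≤ h := by omega
        push_cast
        omega
      · rw [hl] at hlastsum; omega
      · apply Subtype.ext
        show Fin.snoc (Fin.init t) 1 = t
        rw [← hl, Fin.snoc_init_self]
    · refine ⟨Sum.inl ⟨Fin.init t, ⟨init1, init2, ?_⟩⟩, ?_⟩
      · rw [initsum, hl]
        push_cast
        ring
      · apply Subtype.ext
        show Fin.snoc (Fin.init t) (-1) = t
        rw [← hl, Fin.snoc_init_self]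
  haveI : Finite B := finite_path _ (fun s hs => hs.1)
  haveI : Finite C := finite_path _ (fun s hs => hs.1.1)
  rw [← Nat.card_eq_of_bijective g ⟨hginj, hgsurj⟩, Nat.card_sum]

lemma isShape_twoRow {a b : ℕ} (hba : b ≤ a) : IsShape (twoRowShape a b) := by
  constructor
  · intro i
    match i with
    | 0 => simpa [twoRowShape] using hba
    | 1 => simp [twoRowShape]
    | (k+2) => simp [twoRowShape]
  · exact ⟨2, by simp [twoRowShape]⟩

lemma rowsLE_twoRow (a b : ℕ) : RowsLE 2 (twoRowShape a b) := by
  simp [RowsLE, twoRowShape]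

lemma shape_rows0 {f : ℕ → ℕ} (hs : IsShape f) (h2 : RowsLE 2 f) :
    ∀ j, 2 ≤ j → f j = 0 := by
  intro j hj
  induction j with
  | zero => omega
  | succ k ih =>
      rcases Nat.lt_or_ge k 2 with hk | hk
      · have hk1 : k = 1 := by omega
        subst hk1
        exact h2
      · have h1 := hs.1 k
        have h2 := ih (by omega)
        omega

lemma shape_eq_twoRow {f : ℕ → ℕ} (hs : IsShape f) (h2 : RowsLE 2 f) :
    f = twoRowShape (f 0) (f 1) := by
  funext j
  match j with
  | 0 => simp [twoRowShape]
  | 1 => simp [twoRowShape]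
  | k+2 =>
      simp only [twoRowShape]
      rw [if_neg (by omega), if_neg (by omega)]
      exact shape_rows0 hs h2 (k+2) (by omega)

lemma twoRow_inj {p q p' q' : ℕ} (h : twoRowShape p q = twoRowShape p' q') :
    p = p' ∧ q = q' :=
  ⟨by simpa [twoRowShape] using congrFun h 0, by simpa [twoRowShape] using congrFun h 1⟩

lemma starStep_le {l u : ℕ → ℕ} (h : StarStep l u) (j : ℕ) : u j ≤ l j + 1 := by
  rcases h with rfl | ⟨i, hi1, hi2⟩ | ⟨i, hi1, hi2⟩
  · omega
  · by_cases hij : j = i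
    · subst hij; omega
    · rw [hi2 j hij]; omega
  · by_cases hij : j = i
    · subst hij; omega
    · rw [← hi2 j hij]; omega

lemma starTab_bound {lam : ℕ → ℕ} {m : ℕ} {t : ℕ → ℕ → ℕ} (ht : IsStarTab 3 lam m t) :
    ∀ i, i ≤ m → ∀ j, t i j ≤ i := by
  intro i
  induction i with
  | zero =>
      intro _ j
      rw [ht.1]
      simp [emptyShape]
  | succ i ih =>
      intro hi j
      have hstep := ht.2.2.1 i (by omega)
      have h1 := starStep_le hstep j
      have h2 := ih (by omega) j
      omega

lemma finite_starTab (lam : ℕ → ℕ) (m : ℕ) :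
    Finite {t : ℕ → ℕ → ℕ // IsStarTab 3 lam m t} := by
  apply Finite.of_injective (fun t : {t : ℕ → ℕ → ℕ // IsStarTab 3 lam m t} =>
    (fun i : Fin (m+1) =>
      ((⟨min (t.1 i 0) m, by omega⟩ : Fin (m+1)), (⟨min (t.1 i 1) m, by omega⟩ : Fin (m+1)))))
  intro s t h
  apply Subtype.ext
  funext i j
  rcases le_or_gt i m with him | him
  · have hcomp := congrFun h ⟨i, by omega⟩
    have b0s := starTab_bound s.2 i him 0
    have b0t := starTab_bound t.2 i him 0
    have b1s := starTab_bound s.2 i him 1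
    have b1t := starTab_bound t.2 i him 1
    have h0 : min (s.1 i 0) m = min (t.1 i 0) m := congrArg Fin.val (congrArg Prod.fst hcomp)
    have h1 : min (s.1 i 1) m = min (t.1 i 1) m := congrArg Fin.val (congrArg Prod.snd hcomp)
    match j with
    | 0 => omega
    | 1 => omega
    | k+2 =>
        rw [shape_rows0 (s.2.2.2.2 i).1 (s.2.2.2.2 i).2 (k+2) (by omega),
            shape_rows0 (t.2.2.2.2 i).1 (t.2.2.2.2 i).2 (k+2) (by omega)]
  · rw [s.2.2.1 i (by omega), t.2.2.1 i (by omega)]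

lemma Ostar_zero (a b : ℕ) :
    Ostar 3 (twoRowShape a b) 0 = if a = 0 ∧ b = 0 then 1 else 0 := by
  unfold Ostar
  by_cases h0 : a = 0 ∧ b = 0
  · obtain ⟨rfl, rfl⟩ := h0
    rw [if_pos ⟨rfl, rfl⟩]
    have hsh : twoRowShape 0 0 = emptyShape := by
      funext i; simp [twoRowShape, emptyShape]
    haveI : Unique {t : ℕ → ℕ → ℕ // IsStarTab 3 (twoRowShape 0 0) 0 t} := by
      refine ⟨⟨⟨fun _ => twoRowShape 0 0, ?_, ?_, ?_, ?_⟩⟩, ?_⟩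
      · exact hsh
      · intro i _; rfl
      · intro i hi; omega
      · intro i; exact ⟨isShape_twoRow le_rfl, rowsLE_twoRow 0 0⟩
      · rintro ⟨t, ht⟩
        apply Subtype.ext
        funext i
        exact ht.2.1 i (Nat.zero_le i)
    exact Nat.card_unique
  · rw [if_neg h0]
    have : IsEmpty {t : ℕ → ℕ → ℕ // IsStarTab 3 (twoRowShape a b) 0 t} := by
      refine ⟨fun t => h0 ?_⟩
      have h1 : t.1 0 = emptyShape := t.2.1
      have h2 : t.1 0 = twoRowShape a b := t.2.2.1 0 le_rfl
      have h3 : twoRowShape a b = emptyShape := h2 ▸ h1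
      constructor
      · simpa [twoRowShape, emptyShape] using congrFun h3 0
      · simpa [twoRowShape, emptyShape] using congrFun h3 1
    exact Nat.card_of_isEmpty

lemma addSq0 (a b : ℕ) : AddSquareAt 0 (twoRowShape a b) (twoRowShape (a+1) b) := by
  constructor
  · simp [twoRowShape]
  · intro i hi
    simp [twoRowShape, hi]

lemma addSq1 (a b : ℕ) : AddSquareAt 1 (twoRowShape a b) (twoRowShape a (b+1)) := by
  constructor
  · simp [twoRowShape]
  · intro i hi
    simp [twoRowShape, hi]

lemma starStep_classify {a b : ℕ} (hba : b ≤ a) {mu : ℕ → ℕ}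
    (hsh : IsShape mu) (hr : RowsLE 2 mu) (hmu : StarStep mu (twoRowShape a b)) :
    mu = twoRowShape a b ∨ mu = twoRowShape (a+1) b
    ∨ (mu = twoRowShape (a-1) b ∧ b+1 ≤ a)
    ∨ (mu = twoRowShape a (b-1) ∧ 1 ≤ b)
    ∨ (mu = twoRowShape a (b+1) ∧ b+1 ≤ a) := by
  have hmu2 : mu = twoRowShape (mu 0) (mu 1) := shape_eq_twoRow hsh hr
  have hmono : mu 1 ≤ mu 0 := hsh.1 0
  rcases hmu with heq | ⟨j, hj1, hj2⟩ | ⟨j, hj1, hj2⟩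
  · exact Or.inl heq.symm
  · -- twoRowShape a b = mu + square at j
    match j with
    | 0 =>
        have h0 : a = mu 0 + 1 := by simpa [twoRowShape] using hj1
        have h1 : b = mu 1 := by simpa [twoRowShape] using hj2 1 (by omega)
        refine Or.inr (Or.inr (Or.inl ⟨?_, by omega⟩))
        rw [hmu2, show mu 0 = a - 1 by omega, ← h1]
    | 1 =>
        have h0 : a = mu 0 := by simpa [twoRowShape] using hj2 0 (by omega)
        have h1 : b = mu 1 + 1 := by simpa [twoRowShape] using hj1
        refine Or.inr (Or.inr (Or.inr (Or.inl ⟨?_, by omega⟩)))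
        rw [hmu2, ← h0, show mu 1 = b - 1 by omega]
    | k+2 =>
        exfalso
        have : twoRowShape a b (k+2) = mu (k+2) + 1 := hj1
        simp only [twoRowShape] at this
        rw [if_neg (by omega), if_neg (by omega)] at this
        omega
  · -- mu = twoRowShape a b + square at j
    match j with
    | 0 =>
        have h0 : mu 0 = a + 1 := by simpa [twoRowShape] using hj1
        have h1 : mu 1 = b := by simpa [twoRowShape] using hj2 1 (by omega)
        refine Or.inr (Or.inl ?_)
        rw [hmu2, h0, h1]
    | 1 =>
        have h0 : mu 0 = a := by simpa [twoRowShape] using hj2 0 (by omega)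
        have h1 : mu 1 = b + 1 := by simpa [twoRowShape] using hj1
        refine Or.inr (Or.inr (Or.inr (Or.inr ⟨?_, by omega⟩)))
        rw [hmu2, h0, h1]
    | k+2 =>
        exfalso
        have hz : mu (k+2) = 0 := shape_rows0 hsh hr (k+2) (by omega)
        have : mu (k+2) = twoRowShape a b (k+2) + 1 := hj1
        simp only [twoRowShape] at this
        rw [if_neg (by omega), if_neg (by omega)] at this
        omega

def extTab (lam : ℕ → ℕ) (m : ℕ) (t : ℕ → ℕ → ℕ) : ℕ → ℕ → ℕ :=
  fun i => if i ≤ m then t i else lam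

lemma isStarTab_ext {lam mu : ℕ → ℕ} {m : ℕ} {t : ℕ → ℕ → ℕ}
    (hlam : IsShape lam) (hrl : RowsLE 2 lam)
    (hstep : StarStep mu lam) (ht : IsStarTab 3 mu m t) :
    IsStarTab 3 lam (m+1) (extTab lam m t) := by
  obtain ⟨h0, hpad, hsteps, hshapes⟩ := ht
  refine ⟨?_, ?_, ?_, ?_⟩
  · show (if 0 ≤ m then t 0 else lam) = emptyShape
    rw [if_pos (Nat.zero_le m), h0]
  · intro i hi
    show (if i ≤ m then t i else lam) = lam
    rw [if_neg (by omega)]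
  · intro i hi
    by_cases him : i < m
    · show StarStep (if i ≤ m then t i else lam) (if i+1 ≤ m then t (i+1) else lam)
      rw [if_pos (by omega), if_pos (by omega)]
      exact hsteps i him
    · have hieq : i = m := by omega
      subst hieq
      show StarStep (if i ≤ i then t i else lam) (if i+1 ≤ i then t (i+1) else lam)
      rw [if_pos le_rfl, if_neg (by omega), hpad i le_rfl]
      exact hstep
  · intro i
    by_cases him : i ≤ m
    · show IsShape (if i ≤ m then t i else lam) ∧ RowsLE (3-1) (if i ≤ m then t i else lam)
      rw [if_pos him]
      exact hshapes i
    · show IsShape (if i ≤ m then t i else lam) ∧ RowsLE (3-1) (if i ≤ m then t i else lam)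
      rw [if_neg him]
      exact ⟨hlam, hrl⟩

lemma ext_inj {lam : ℕ → ℕ} {m : ℕ} {mu1 mu2 : ℕ → ℕ} {t1 t2 : ℕ → ℕ → ℕ}
    (h1 : IsStarTab 3 mu1 m t1) (h2 : IsStarTab 3 mu2 m t2)
    (he : extTab lam m t1 = extTab lam m t2) : mu1 = mu2 ∧ t1 = t2 := by
  have key : ∀ i, i ≤ m → t1 i = t2 i := by
    intro i hi
    have := congrFun he i
    simpa [extTab, hi] using this
  have hmu : mu1 = mu2 := by
    rw [← h1.2.1 m le_rfl, ← h2.2.1 m le_rfl]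
    exact key m le_rfl
  refine ⟨hmu, funext fun i => ?_⟩
  by_cases hi : i ≤ m
  · exact key i hi
  · rw [h1.2.1 i (by omega), h2.2.1 i (by omega), hmu]

lemma ext_trunc {lam : ℕ → ℕ} {m : ℕ} {t : ℕ → ℕ → ℕ} (ht : IsStarTab 3 lam (m+1) t) :
    extTab lam m (fun i => t (min i m)) = t := by
  funext i
  by_cases him : i ≤ m
  · simp only [extTab, if_pos him]
    rw [min_eq_left him]
  · simp only [extTab, if_neg him]
    exact (ht.2.1 i (by omega)).symm

lemma isStarTab_trunc {lam : ℕ → ℕ} {m : ℕ} {t : ℕ → ℕ → ℕ} (ht : IsStarTab 3 lam (m+1) t) :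
    IsStarTab 3 (t m) m (fun i => t (min i m)) := by
  obtain ⟨h0, hpad, hsteps, hshapes⟩ := ht
  refine ⟨?_, ?_, ?_, ?_⟩
  · show t (min 0 m) = emptyShape
    rw [Nat.min_eq_left (Nat.zero_le m)]
    exact h0
  · intro i hi
    show t (min i m) = t m
    rw [min_eq_right hi]
  · intro i hi
    show StarStep (t (min i m)) (t (min (i+1) m))
    rw [min_eq_left (by omega), min_eq_left (by omega)]
    exact hsteps i (by omega)
  · intro i
    exact hshapes (min i m)

lemma Ostar_succ (a b m : ℕ) (hba : b ≤ a) :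
    Ostar 3 (twoRowShape a b) (m+1)
      = Ostar 3 (twoRowShape a b) m + Ostar 3 (twoRowShape (a+1) b) m
        + (if b+1 ≤ a then Ostar 3 (twoRowShape (a-1) b) m else 0)
        + (if 1 ≤ b then Ostar 3 (twoRowShape a (b-1)) m else 0)
        + (if b+1 ≤ a then Ostar 3 (twoRowShape a (b+1)) m else 0) := by
  classical
  unfold Ostar
  rw [← card_subtype_and (IsStarTab 3 (twoRowShape (a-1) b) m) (b+1 ≤ a),
      ← card_subtype_and (IsStarTab 3 (twoRowShape a (b-1)) m) (1 ≤ b),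
      ← card_subtype_and (IsStarTab 3 (twoRowShape a (b+1)) m) (b+1 ≤ a)]
  set lam := twoRowShape a b with hlam
  have hlsh : IsShape lam := isShape_twoRow hba
  have hlr : RowsLE 2 lam := rowsLE_twoRow a b
  let T0 := {t : ℕ → ℕ → ℕ // IsStarTab 3 lam m t}
  let T1 := {t : ℕ → ℕ → ℕ // IsStarTab 3 (twoRowShape (a+1) b) m t}
  let T2 := {t : ℕ → ℕ → ℕ // IsStarTab 3 (twoRowShape (a-1) b) m t ∧ b+1 ≤ a}
  let T3 := {t : ℕ → ℕ → ℕ // IsStarTab 3 (twoRowShape a (b-1)) m t ∧ 1 ≤ b}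
  let T4 := {t : ℕ → ℕ → ℕ // IsStarTab 3 (twoRowShape a (b+1)) m t ∧ b+1 ≤ a}
  have step0 : StarStep lam lam := Or.inl rfl
  have step1 : StarStep (twoRowShape (a+1) b) lam :=
    Or.inr (Or.inr ⟨0, addSq0 a b⟩)
  have step2 : b+1 ≤ a → StarStep (twoRowShape (a-1) b) lam := by
    intro hc
    refine Or.inr (Or.inl ⟨0, ?_⟩)
    have := addSq0 (a-1) b
    rwa [show a-1+1 = a by omega] at this
  have step3 : 1 ≤ b → StarStep (twoRowShape a (b-1)) lam := by
    intro hc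
    refine Or.inr (Or.inl ⟨1, ?_⟩)
    have := addSq1 a (b-1)
    rwa [show b-1+1 = b by omega] at this
  have step4 : b+1 ≤ a → StarStep (twoRowShape a (b+1)) lam := by
    intro _
    exact Or.inr (Or.inr ⟨1, addSq1 a b⟩)
  let g : T0 ⊕ T1 ⊕ T2 ⊕ T3 ⊕ T4 → {t : ℕ → ℕ → ℕ // IsStarTab 3 lam (m+1) t} :=
    Sum.elim (fun t => ⟨extTab lam m t.1, isStarTab_ext hlsh hlr step0 t.2⟩)
      (Sum.elim (fun t => ⟨extTab lam m t.1, isStarTab_ext hlsh hlr step1 t.2⟩)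
        (Sum.elim (fun t => ⟨extTab lam m t.1, isStarTab_ext hlsh hlr (step2 t.2.2) t.2.1⟩)
          (Sum.elim (fun t => ⟨extTab lam m t.1, isStarTab_ext hlsh hlr (step3 t.2.2) t.2.1⟩)
            (fun t => ⟨extTab lam m t.1, isStarTab_ext hlsh hlr (step4 t.2.2) t.2.1⟩))))
  have hginj : Function.Injective g := by
    intro x y hxy
    rcases x with t1 | t1 | t1 | t1 | t1 <;> rcases y with t2 | t2 | t2 | t2 | t2 <;>
      simp only [g, Sum.elim_inl, Sum.elim_inr, Subtype.mk.injEq] at hxy <;>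
      [ (obtain ⟨hmu, ht⟩ := ext_inj t1.2 t2.2 hxy);
        (obtain ⟨hmu, ht⟩ := ext_inj t1.2 t2.2 hxy);
        (obtain ⟨hmu, ht⟩ := ext_inj t1.2 t2.2.1 hxy);
        (obtain ⟨hmu, ht⟩ := ext_inj t1.2 t2.2.1 hxy);
        (obtain ⟨hmu, ht⟩ := ext_inj t1.2 t2.2.1 hxy);
        (obtain ⟨hmu, ht⟩ := ext_inj t1.2 t2.2 hxy);
        (obtain ⟨hmu, ht⟩ := ext_inj t1.2 t2.2 hxy);
        (obtain ⟨hmu, ht⟩ := ext_inj t1.2 t2.2.1 hxy);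
        (obtain ⟨hmu, ht⟩ := ext_inj t1.2 t2.2.1 hxy);
        (obtain ⟨hmu, ht⟩ := ext_inj t1.2 t2.2.1 hxy);
        (obtain ⟨hmu, ht⟩ := ext_inj t1.2.1 t2.2 hxy);
        (obtain ⟨hmu, ht⟩ := ext_inj t1.2.1 t2.2 hxy);
        (obtain ⟨hmu, ht⟩ := ext_inj t1.2.1 t2.2.1 hxy);
        (obtain ⟨hmu, ht⟩ := ext_inj t1.2.1 t2.2.1 hxy);
        (obtain ⟨hmu, ht⟩ := ext_inj t1.2.1 t2.2.1 hxy);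
        (obtain ⟨hmu, ht⟩ := ext_inj t1.2.1 t2.2 hxy);
        (obtain ⟨hmu, ht⟩ := ext_inj t1.2.1 t2.2 hxy);
        (obtain ⟨hmu, ht⟩ := ext_inj t1.2.1 t2.2.1 hxy);
        (obtain ⟨hmu, ht⟩ := ext_inj t1.2.1 t2.2.1 hxy);
        (obtain ⟨hmu, ht⟩ := ext_inj t1.2.1 t2.2.1 hxy);
        (obtain ⟨hmu, ht⟩ := ext_inj t1.2.1 t2.2 hxy);
        (obtain ⟨hmu, ht⟩ := ext_inj t1.2.1 t2.2 hxy);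
        (obtain ⟨hmu, ht⟩ := ext_inj t1.2.1 t2.2.1 hxy);
        (obtain ⟨hmu, ht⟩ := ext_inj t1.2.1 t2.2.1 hxy);
        (obtain ⟨hmu, ht⟩ := ext_inj t1.2.1 t2.2.1 hxy)] <;>
      first
        | (simp only [Sum.inl.injEq, Sum.inr.injEq]; exact Subtype.ext ht)
        | (exfalso
           have hc1 := t1.2.2
           have hc2 := t2.2.2
           try rw [hlam] at hmu
           have h01 := twoRow_inj hmu
           omega)
  have hgsurj : Function.Surjective g := by
    rintro ⟨t, ht⟩
    have hstep : StarStep (t m) lam := by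
      have h1 := ht.2.2.1 m (by omega)
      rwa [ht.2.1 (m+1) (by omega)] at h1
    have hcls := starStep_classify hba (ht.2.2.2 m).1 (ht.2.2.2 m).2 hstep
    have htr := isStarTab_trunc ht
    have hext := ext_trunc ht
    rcases hcls with hc | hc | ⟨hc, hcond⟩ | ⟨hc, hcond⟩ | ⟨hc, hcond⟩
    · rw [hc] at htr
      exact ⟨Sum.inl ⟨fun i => t (min i m), htr⟩, Subtype.ext hext⟩
    · rw [hc] at htr
      exact ⟨Sum.inr (Sum.inl ⟨fun i => t (min i m), htr⟩), Subtype.ext hext⟩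
    · rw [hc] at htr
      exact ⟨Sum.inr (Sum.inr (Sum.inl ⟨fun i => t (min i m), htr, hcond⟩)), Subtype.ext hext⟩
    · rw [hc] at htr
      exact ⟨Sum.inr (Sum.inr (Sum.inr (Sum.inl ⟨fun i => t (min i m), htr, hcond⟩))), Subtype.ext hext⟩
    · rw [hc] at htr
      exact ⟨Sum.inr (Sum.inr (Sum.inr (Sum.inr ⟨fun i => t (min i m), htr, hcond⟩))), Subtype.ext hext⟩
  haveI i0 : Finite T0 := finite_starTab lam m
  haveI i1 : Finite T1 := finite_starTab (twoRowShape (a+1) b) m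
  haveI i2' : Finite {t : ℕ → ℕ → ℕ // IsStarTab 3 (twoRowShape (a-1) b) m t} :=
    finite_starTab (twoRowShape (a-1) b) m
  haveI i3' : Finite {t : ℕ → ℕ → ℕ // IsStarTab 3 (twoRowShape a (b-1)) m t} :=
    finite_starTab (twoRowShape a (b-1)) m
  haveI i4' : Finite {t : ℕ → ℕ → ℕ // IsStarTab 3 (twoRowShape a (b+1)) m t} :=
    finite_starTab (twoRowShape a (b+1)) m
  haveI i2 : Finite T2 := Finite.of_injective
    (fun x : T2 => (⟨x.1, x.2.1⟩ : {t : ℕ → ℕ → ℕ // IsStarTab 3 (twoRowShape (a-1) b) m t}))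
    (by intro x y h; simp only [Subtype.mk.injEq] at h; exact Subtype.ext h)
  haveI i3 : Finite T3 := Finite.of_injective
    (fun x : T3 => (⟨x.1, x.2.1⟩ : {t : ℕ → ℕ → ℕ // IsStarTab 3 (twoRowShape a (b-1)) m t}))
    (by intro x y h; simp only [Subtype.mk.injEq] at h; exact Subtype.ext h)
  haveI i4 : Finite T4 := Finite.of_injective
    (fun x : T4 => (⟨x.1, x.2.1⟩ : {t : ℕ → ℕ → ℕ // IsStarTab 3 (twoRowShape a (b+1)) m t}))
    (by intro x y h; simp only [Subtype.mk.injEq] at h; exact Subtype.ext h)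
  rw [← Nat.card_eq_of_bijective g ⟨hginj, hgsurj⟩,
      Nat.card_sum, Nat.card_sum, Nat.card_sum, Nat.card_sum]
  unfold T0 T1 T2 T3 T4
  omega

lemma Fpath_eq_fcnt (n : ℕ) : ∀ h : ℕ, Fpath n h = fcnt n h := by
  induction n with
  | zero =>
      intro h
      rw [Fpath_zero]
      rfl
  | succ n ih =>
      intro h
      rw [Fpath_succ, ih (h+1), fcnt_succ]
      by_cases hh : 1 ≤ h
      · rw [if_pos hh, if_pos hh, ih (h-1)]
      · rw [if_neg hh, if_neg hh]

lemma Ostar_eq_cnt (m : ℕ) : ∀ a b : ℕ, b ≤ a → Ostar 3 (twoRowShape a b) m = cnt m a b := by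
  induction m with
  | zero =>
      intro a b _
      rw [Ostar_zero]
      rfl
  | succ m ih =>
      intro a b hba
      rw [Ostar_succ a b m hba, ih a b hba, ih (a+1) b (by omega)]
      show _ = cnt m a b + cnt m (a+1) b + (if b+1 ≤ a then cnt m (a-1) b else 0)
          + (if 1 ≤ b then cnt m a (b-1) else 0) + (if b+1 ≤ a then cnt m a (b+1) else 0)
      by_cases h1 : b+1 ≤ a <;> by_cases h2 : 1 ≤ b <;>
        simp only [h1, h2, if_true, if_false, if_pos, if_neg, not_false_iff] <;>
        try rw [ih (a-1) b (by omega)] <;> try rw [ih a (b-1) (by omega)] <;>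
        try rw [ih a (b+1) h1]
      all_goals try rw [ih a (b-1) (by omega)]
      all_goals try rw [ih a (b+1) h1]


/-- for a two-row shape `λ = (x₁, x₂)`, with `h₁ = x₁ + x₂`, `h₂ = x₁ − x₂` and
`t(m, h₁, h₂) = F(m+2, h₁+2)·F(m, h₂) − F(m+2, h₂)·F(m, h₁+2)`,
`O_3^*(λ, m) = Σ_{s=0}^{m} C(m, s) · t(m−s, h₁, h₂)`. -/
theorem Ostar_three_formula (x1 x2 : ℕ) (hx : x2 ≤ x1) (m : ℕ) :
    (Ostar 3 (twoRowShape x1 x2) m : ℤ) =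
      ∑ s ∈ Finset.range (m + 1), (m.choose s : ℤ) *
        ((Fpath (m - s + 2) (x1 + x2 + 2) : ℤ) * (Fpath (m - s) (x1 - x2) : ℤ)
          - (Fpath (m - s + 2) (x1 - x2) : ℤ) * (Fpath (m - s) (x1 + x2 + 2) : ℤ)) := by
  have h1 : (Ostar 3 (twoRowShape x1 x2) m : ℤ) = Rr m ((x1:ℤ)+x2) ((x1:ℤ)-x2) := by
    rw [Ostar_eq_cnt m x1 x2 hx]
    exact cnt_eq_Rr m x1 x2 hx
  rw [h1]
  unfold Rr
  apply Finset.sum_congr rfl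
  intro s _
  congr 1
  unfold Tz
  rw [show (x1:ℤ)+(x2:ℤ)+2 = ((x1+x2+2:ℕ):ℤ) by push_cast; try ring,
      show (x1:ℤ)-(x2:ℤ) = ((x1-x2:ℕ):ℤ) by omega,
      Fz_ofNat, Fz_ofNat, Fz_ofNat, Fz_ofNat]
  simp only [Fpath_eq_fcnt]
  try push_cast
  try ring
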